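/- Let J ⊆ (0,∞) be an open interval, c₁, c₂ ∈ ℝ, and let a : J → ℝ be differentiable with a(R) ≠ 0 for all R, and b : J → ℝ twice differentiable with b′(R) ≠ 0 for all R. Suppose that for all R ∈ J: R·a′(R) = −a(R)·(c₁·a(R)² + c₂·a(R) + 1) and R·b′′(R) = −c₁·a(R)²·b′(R). Then for every R ∈ J and every π ∈ ℝ, π + 1/3 − (1/3)·(π+1)·[ a′(R)·R/a(R)² + 1/a(R) + (π + 1 − a(R))·R·b′′(R)/(a(R)²·b′(R)) ] = β·π² + γ·π + δ, where β = c₁/3, γ = 1 + (c₂ + 2c₁)/3, and δ = (c₁ + c₂ + 1)/3. -/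
import Mathlib


/-- Proposition 4: under the two equations of Theorem 1, the indicatrix of an ideal gas
Stephani universe reduces to the quadratic polynomial `βπ² + γπ + δ`. -/
theorem stmt_3
    (J : Set ℝ) (hJint : ∃ u v : ℝ, J = Set.Ioo u v)
    (hJsub : J ⊆ Set.Ioi (0 : ℝ))
    (c₁ c₂ : ℝ)
    (a b : ℝ → ℝ)
    (hadiff : ∀ R ∈ J, DifferentiableAt ℝ a R)
    (hane : ∀ R ∈ J, a R ≠ 0)
    (hbdiff : ∀ R ∈ J, DifferentiableAt ℝ b R)
    (hbdiff2 : ∀ R ∈ J, DifferentiableAt ℝ (deriv b) R)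
    (hb' : ∀ R ∈ J, deriv b R ≠ 0)
    (heq1 : ∀ R ∈ J, R * deriv a R = -a R * (c₁ * (a R)^2 + c₂ * a R + 1))
    (heq2 : ∀ R ∈ J, R * deriv (deriv b) R = -c₁ * (a R)^2 * deriv b R) :
    ∀ R ∈ J, ∀ π : ℝ,
      π + 1/3 - (1/3) * (π + 1) *
        (deriv a R * R / (a R)^2 + 1 / a R +
          (π + 1 - a R) * R * deriv (deriv b) R / ((a R)^2 * deriv b R)) =
      (c₁ / 3) * π^2 + (1 + (c₂ + 2 * c₁) / 3) * π + (c₁ + c₂ + 1) / 3 := by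
  intro R hR π
  have hR0 : R ≠ 0 := ne_of_gt (hJsub hR)
  have ha := hane R hR
  have hb := hb' R hR
  have h1 : deriv a R = -a R * (c₁ * (a R)^2 + c₂ * a R + 1) / R := by
    rw [eq_div_iff hR0]; linear_combination heq1 R hR
  have h2 : deriv (deriv b) R = -c₁ * (a R)^2 * deriv b R / R := by
    rw [eq_div_iff hR0]; linear_combination heq2 R hR
  rw [h1, h2]
  field_simp
  ring
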